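/- Let K be an algebraically closed field, R = K[t, t^{-1}] the Laurent polynomial ring, and A an a×b matrix over R. Let r be the rank of A over the fraction field K(t) of R. For each positive integer N let R_N = R/(t^N − 1), a K-algebra of dimension N, and let A_N : R_N^b → R_N^a be the K-linear map induced by A. Then there exists a constant c, independent of N, such that for every positive integer N one has N·r − c ≤ rank_K(A_N) ≤ N·r. -/

import Mathlib

set_option synthInstance.maxHeartbeats 1000000
set_option maxHeartbeats 2000000

/-- The ideal `(t^N - 1)` of the Laurent polynomial ring `R = K[t,t⁻¹]`, so that
`R_N = R ⧸ (t^N - 1)` is an `N`-dimensional `K`-algebra. -/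
noncomputable def tIdeal (K : Type) [Field K] (N : ℕ) : Ideal (LaurentPolynomial K) :=
  Ideal.span {(LaurentPolynomial.T 1 : LaurentPolynomial K) ^ N - 1}

/-- The `K`-linear map `R_N^b → R_N^a` induced by a matrix `A` over `R = K[t,t⁻¹]`,
where `R_N = R ⧸ (t^N - 1)`. -/
noncomputable def matrixModN {K : Type} [Field K] {a b : ℕ} (N : ℕ)
    (A : Matrix (Fin a) (Fin b) (LaurentPolynomial K)) :
    (Fin b → LaurentPolynomial K ⧸ tIdeal K N) →ₗ[K]
      (Fin a → LaurentPolynomial K ⧸ tIdeal K N) :=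
  (Matrix.mulVecLin (A.map (Ideal.Quotient.mk (tIdeal K N)))).restrictScalars K

namespace Stmt11Aux

open LaurentPolynomial Polynomial

noncomputable instance (K : Type*) [Field K] : IsDomain (LaurentPolynomial K) :=
  NoZeroDivisors.to_isDomain _

instance (K : Type*) [Field K] : IsPrincipalIdealRing (LaurentPolynomial K) := by
  constructor
  intro J
  obtain ⟨g, hg⟩ := (IsPrincipalIdealRing.principal
    (J.comap (Polynomial.toLaurent (R := K)))).principal
  refine ⟨⟨Polynomial.toLaurent g, le_antisymm ?_ ?_⟩⟩
  · intro x hx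
    obtain ⟨n, f', hf⟩ := x.exists_T_pow
    have hf'mem : f' ∈ J.comap (Polynomial.toLaurent (R := K)) := by
      simp only [Ideal.mem_comap, hf]
      exact J.mul_mem_right _ hx
    rw [hg] at hf'mem
    rw [Ideal.submodule_span_eq, Ideal.mem_span_singleton] at hf'mem
    obtain ⟨h, hh⟩ := hf'mem
    show x ∈ Ideal.span {Polynomial.toLaurent g}
    rw [Ideal.mem_span_singleton]
    refine ⟨Polynomial.toLaurent h * T (-(n : ℤ)), ?_⟩
    have hx2 : x * T (n : ℤ) * T (-(n : ℤ)) = x := by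
      rw [mul_assoc, ← T_add, add_neg_cancel, T_zero, mul_one]
    rw [← hx2, ← hf, hh, map_mul]
    ring
  · show Ideal.span {Polynomial.toLaurent g} ≤ J
    rw [Ideal.span_le, Set.singleton_subset_iff]
    have : g ∈ J.comap (Polynomial.toLaurent (R := K)) := by
      rw [hg, Ideal.submodule_span_eq]
      exact Ideal.mem_span_singleton_self g
    exact this

variable {K : Type} [Field K]

theorem quotSpanToLaurentEquiv (p : K[X]) (hp : p.coeff 0 ≠ 0) :
    Nonempty (AdjoinRoot p ≃ₗ[K] (LaurentPolynomial K ⧸ Ideal.span {Polynomial.toLaurent p})) := by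
  classical
  have hp0 : p ≠ 0 := fun h => hp (by simp [h])
  set c := p.coeff 0 with hc
  set I : Ideal (LaurentPolynomial K) := Ideal.span {Polynomial.toLaurent p} with hI
  have h1 : (Polynomial.C (-(c⁻¹)) : K[X]) * Polynomial.C c = -1 := by
    rw [← Polynomial.C_mul, neg_mul, inv_mul_cancel₀ hp, map_neg, Polynomial.C_1]
  have hpoly : Polynomial.C (-(c⁻¹)) * p.divX * X = Polynomial.C (-(c⁻¹)) * p + 1 := by
    linear_combination (Polynomial.C (-(c⁻¹))) * (Polynomial.X_mul_divX_add p) - h1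
  have hmk : AdjoinRoot.mk p (Polynomial.C (-(c⁻¹)) * p.divX * X) = 1 := by
    rw [hpoly, map_add, map_mul, AdjoinRoot.mk_self, mul_zero, map_one, zero_add]
  let u : (AdjoinRoot p)ˣ :=
    ⟨AdjoinRoot.root p, AdjoinRoot.mk p (Polynomial.C (-(c⁻¹)) * p.divX),
      by rw [← AdjoinRoot.mk_X (f := p), ← map_mul, ← hmk]; ring_nf,
      by rw [← AdjoinRoot.mk_X (f := p), ← map_mul, ← hmk]⟩
  have huval : (u : AdjoinRoot p) = AdjoinRoot.root p := rfl
  let ψ : LaurentPolynomial K →ₐ[K] AdjoinRoot p :=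
    AddMonoidAlgebra.lift K _ ℤ ((Units.coeHom _).comp (zpowersHom _ u))
  have hψT : ∀ z : ℤ, ψ (T z) = ↑(u ^ z) := by
    intro z
    show (AddMonoidAlgebra.lift K _ ℤ ((Units.coeHom _).comp (zpowersHom _ u)))
      (AddMonoidAlgebra.single z (1 : K)) = _
    rw [AddMonoidAlgebra.lift_single, one_smul]
    simp [zpowersHom_apply]
  have hψ1 : ψ (T 1) = AdjoinRoot.root p := by rw [hψT 1, zpow_one, huval]
  have hcomp : ψ.comp Polynomial.toLaurentAlg = Polynomial.aeval (AdjoinRoot.root p) := by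
    apply Polynomial.algHom_ext
    rw [AlgHom.comp_apply, Polynomial.toLaurentAlg_apply, Polynomial.toLaurent_X,
      Polynomial.aeval_X, hψ1]
  have hψp : ψ (Polynomial.toLaurent p) = 0 := by
    have := congrArg (fun f => f p) hcomp
    simp only [AlgHom.comp_apply, Polynomial.toLaurentAlg_apply] at this
    rw [this, AdjoinRoot.aeval_eq, AdjoinRoot.mk_self]
  let ψ' : (LaurentPolynomial K ⧸ I) →ₐ[K] AdjoinRoot p :=
    Ideal.Quotient.liftₐ I ψ (by
      intro x hx
      rw [hI, Ideal.mem_span_singleton] at hx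
      obtain ⟨y, rfl⟩ := hx
      rw [map_mul, hψp, zero_mul])
  have haev : Polynomial.aeval (Ideal.Quotient.mk I (T 1)) p = 0 := by
    have h2 : (Ideal.Quotient.mkₐ K I).comp Polynomial.toLaurentAlg
        = Polynomial.aeval (Ideal.Quotient.mk I (T 1)) := by
      apply Polynomial.algHom_ext
      rw [AlgHom.comp_apply, Polynomial.toLaurentAlg_apply, Polynomial.toLaurent_X,
        Polynomial.aeval_X, Ideal.Quotient.mkₐ_eq_mk]
    have := congrArg (fun f => f p) h2
    simp only [AlgHom.comp_apply, Polynomial.toLaurentAlg_apply, Ideal.Quotient.mkₐ_eq_mk] at this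
    rw [← this, Ideal.Quotient.eq_zero_iff_mem]
    exact Ideal.subset_span rfl
  let φ : AdjoinRoot p →ₐ[K] (LaurentPolynomial K ⧸ I) :=
    AdjoinRoot.liftAlgHom p (Algebra.ofId K _) (Ideal.Quotient.mk I (T 1)) haev
  have hφroot : φ (AdjoinRoot.root p) = Ideal.Quotient.mk I (T 1) :=
    AdjoinRoot.liftAlgHom_root (h := haev)
  have hli : ψ'.comp φ = AlgHom.id K _ := by
    apply AdjoinRoot.algHom_ext
    rw [AlgHom.comp_apply, hφroot, AlgHom.id_apply]
    show ψ (T 1) = _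
    rw [hψ1]
  have hinj : Function.Injective φ := by
    intro x y h
    have := congrArg ψ' h
    have h1 := congrArg (fun f => f x) hli
    have h2 := congrArg (fun f => f y) hli
    simp only [AlgHom.comp_apply, AlgHom.id_apply] at h1 h2
    rw [← h1, ← h2, this]
  have hmkq : ∀ q : K[X], φ (AdjoinRoot.mk p q) = Ideal.Quotient.mk I (Polynomial.toLaurent q) := by
    have h3 : (φ.toRingHom.comp (AdjoinRoot.mk p) : K[X] →+* (LaurentPolynomial K ⧸ I))
        = (Ideal.Quotient.mk I).comp (Polynomial.toLaurent (R := K)) := by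
      apply Polynomial.ringHom_ext'
      · ext r
        simp only [RingHom.comp_apply, RingHom.coe_comp, Function.comp_apply]
        rw [show (AdjoinRoot.mk p) (Polynomial.C r) = algebraMap K _ r from rfl]
        rw [show φ.toRingHom (algebraMap K (AdjoinRoot p) r) = algebraMap K _ r from φ.commutes r]
        rw [Polynomial.toLaurent_C]
        rfl
      · simp only [RingHom.comp_apply, RingHom.coe_comp, Function.comp_apply]
        rw [AdjoinRoot.mk_X, Polynomial.toLaurent_X]
        exact hφroot
    intro q
    exact congrArg (fun f => f q) h3
  have hTinv : φ ((↑u⁻¹ : AdjoinRoot p)) = Ideal.Quotient.mk I (T (-1)) := by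
    have e1 : φ (↑u⁻¹) * Ideal.Quotient.mk I (T 1) = 1 := by
      rw [← hφroot, ← huval, ← map_mul, Units.inv_mul, map_one]
    calc φ (↑u⁻¹) = φ (↑u⁻¹) * (Ideal.Quotient.mk I (T 1) * Ideal.Quotient.mk I (T (-1))) := by
          rw [← map_mul, ← T_add, add_neg_cancel, T_zero, map_one, mul_one]
      _ = (φ (↑u⁻¹) * Ideal.Quotient.mk I (T 1)) * Ideal.Quotient.mk I (T (-1)) := by ring
      _ = Ideal.Quotient.mk I (T (-1)) := by rw [e1, one_mul]
  have hsurj : Function.Surjective φ := by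
    intro y
    obtain ⟨x, rfl⟩ := Ideal.Quotient.mk_surjective y
    induction x using LaurentPolynomial.induction_on_mul_T with
    | mul_T =>
      rename_i q n
      refine ⟨AdjoinRoot.mk p q * (↑u⁻¹ : AdjoinRoot p) ^ n, ?_⟩
      rw [map_mul, map_pow, hmkq, hTinv, map_mul]
      congr 1
      rw [← map_pow, T_pow]
      norm_num
  exact ⟨LinearEquiv.ofBijective φ.toLinearMap ⟨hinj, hsurj⟩⟩

theorem finite_quot_toLaurent (p : K[X]) (hp : p.coeff 0 ≠ 0) :
    Module.Finite K (LaurentPolynomial K ⧸ Ideal.span {Polynomial.toLaurent p}) := by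
  obtain ⟨e⟩ := quotSpanToLaurentEquiv p hp
  have hp0 : p ≠ 0 := fun h => hp (by simp [h])
  haveI : Module.Finite K (AdjoinRoot p) :=
    Module.Finite.of_basis (AdjoinRoot.powerBasis hp0).basis
  exact Module.Finite.equiv e

theorem finrank_quot_toLaurent (p : K[X]) (hp : p.coeff 0 ≠ 0) :
    Module.finrank K (LaurentPolynomial K ⧸ Ideal.span {Polynomial.toLaurent p})
      = p.natDegree := by
  obtain ⟨e⟩ := quotSpanToLaurentEquiv p hp
  have hp0 : p ≠ 0 := fun h => hp (by simp [h])
  rw [← e.finrank_eq, (AdjoinRoot.powerBasis hp0).finrank, AdjoinRoot.powerBasis_dim]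

theorem tIdeal_eq (N : ℕ) :
    tIdeal K N = Ideal.span {Polynomial.toLaurent ((X : K[X]) ^ N - 1)} := by
  rw [tIdeal]
  congr 1
  rw [map_sub, map_pow, Polynomial.toLaurent_X, map_one]

theorem coeff_X_pow_sub_one (N : ℕ) (hN : 0 < N) : ((X : K[X]) ^ N - 1).coeff 0 ≠ 0 := by
  rw [Polynomial.coeff_sub, Polynomial.coeff_X_pow, Polynomial.coeff_one,
    if_neg (by omega), if_pos rfl]
  simp

theorem finite_quot_tIdeal (N : ℕ) (hN : 0 < N) :
    Module.Finite K (LaurentPolynomial K ⧸ tIdeal K N) := by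
  rw [tIdeal_eq]
  exact finite_quot_toLaurent _ (coeff_X_pow_sub_one N hN)

theorem finrank_quot_tIdeal (N : ℕ) (hN : 0 < N) :
    Module.finrank K (LaurentPolynomial K ⧸ tIdeal K N) = N := by
  rw [tIdeal_eq, finrank_quot_toLaurent _ (coeff_X_pow_sub_one N hN)]
  rw [show ((X : K[X]) ^ N - 1) = X ^ N - Polynomial.C 1 by rw [Polynomial.C_1]]
  exact Polynomial.natDegree_X_pow_sub_C

theorem finite_quot_span_singleton (d : LaurentPolynomial K) (hd : d ≠ 0) :
    Module.Finite K (LaurentPolynomial K ⧸ Ideal.span {d}) := by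
  obtain ⟨m, p0, hp⟩ := d.exists_T_pow
  have hp0 : p0 ≠ 0 := by
    intro h
    rw [h, map_zero] at hp
    exact hd (by
      rcases mul_eq_zero.mp hp.symm with h1 | h2
      · exact h1
      · exact absurd h2 (LaurentPolynomial.isUnit_T (m : ℤ)).ne_zero)
  obtain ⟨g, hg, hgnd⟩ := p0.exists_eq_pow_rootMultiplicity_mul_and_not_dvd hp0 0
  rw [map_zero, sub_zero] at hg hgnd
  set k := p0.rootMultiplicity 0 with hk
  clear_value k
  have hgc : g.coeff 0 ≠ 0 := fun h => hgnd (Polynomial.X_dvd_iff.mpr h)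
  have hassoc : Associated d (Polynomial.toLaurent g) := by
    refine ⟨(LaurentPolynomial.isUnit_T ((m : ℤ) - (k : ℤ))).unit, ?_⟩
    rw [IsUnit.unit_spec]
    have h2 : Polynomial.toLaurent p0
        = T ((k : ℤ)) * Polynomial.toLaurent g := by
      rw [hg, map_mul, map_pow, Polynomial.toLaurent_X, T_pow, mul_one]
    have h3 : d * T (m : ℤ) * T (-(k : ℤ))
        = Polynomial.toLaurent g * (T ((k : ℤ))
            * T (-(k : ℤ))) := by
      rw [← hp, h2]; ring
    rw [← T_add, add_neg_cancel, T_zero, mul_one] at h3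
    rw [← h3, mul_assoc, ← T_add]
    congr 2
  rw [show Ideal.span {d} = Ideal.span {Polynomial.toLaurent g} from
    Ideal.span_singleton_eq_span_singleton.mpr hassoc]
  exact finite_quot_toLaurent g hgc

/-- The componentwise quotient map, as a `K`-linear map. -/
noncomputable def piQuotMap (K : Type) [Field K] (N a : ℕ) :
    (Fin a → LaurentPolynomial K) →ₗ[K] (Fin a → LaurentPolynomial K ⧸ tIdeal K N) :=
  LinearMap.pi fun i => ((Ideal.Quotient.mkₐ K (tIdeal K N)).toLinearMap).comp (LinearMap.proj i)

theorem range_matrixModN {a b : ℕ} (N : ℕ) (C : Matrix (Fin a) (Fin b) (LaurentPolynomial K)) :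
    LinearMap.range (matrixModN N C) =
      Submodule.map (piQuotMap K N a)
        ((LinearMap.range C.mulVecLin).restrictScalars K) := by
  ext x
  simp only [Submodule.mem_map, Submodule.restrictScalars_mem, LinearMap.mem_range]
  constructor
  · rintro ⟨v, rfl⟩
    choose w hw using fun j => Ideal.Quotient.mk_surjective (v j)
    refine ⟨C.mulVec w, ⟨w, rfl⟩, ?_⟩
    funext i
    show Ideal.Quotient.mk (tIdeal K N) ((C.mulVec w) i)
      = (C.map (Ideal.Quotient.mk (tIdeal K N))).mulVec v i
    rw [RingHom.map_mulVec]
    congr 1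
    funext j
    exact hw j
  · rintro ⟨y, ⟨w, rfl⟩, rfl⟩
    refine ⟨fun j => Ideal.Quotient.mk _ (w j), ?_⟩
    funext i
    show (C.map (Ideal.Quotient.mk (tIdeal K N))).mulVec (fun j => Ideal.Quotient.mk _ (w j)) i
      = Ideal.Quotient.mk (tIdeal K N) (C.mulVecLin w i)
    rw [Matrix.mulVecLin_apply, RingHom.map_mulVec]
    rfl

theorem finrank_submodule_pi {V : Type*} [AddCommGroup V] [Module K V] {a : ℕ}
    (W : Fin a → Submodule K V) [∀ j, Module.Finite K (W j)] :
    Module.finrank K (Submodule.pi Set.univ W) = ∑ j, Module.finrank K (W j) := by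
  let g : (∀ j, W j) →ₗ[K] (Fin a → V) :=
    LinearMap.pi fun j => (W j).subtype.comp (LinearMap.proj j)
  have hinj : Function.Injective g := by
    intro x y h
    funext j
    exact Subtype.ext (congrFun h j)
  have hrange : LinearMap.range g = Submodule.pi Set.univ W := by
    ext x
    simp only [LinearMap.mem_range, Submodule.mem_pi, Set.mem_univ, forall_true_left]
    constructor
    · rintro ⟨y, rfl⟩ j
      exact (y j).2
    · intro h
      exact ⟨fun j => ⟨x j, h j⟩, rfl⟩
  rw [← hrange, LinearMap.finrank_range_of_inj hinj, Module.finrank_pi_fintype]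

theorem finrank_range_mulLeft_ge (N : ℕ) (hN : 0 < N) (d : LaurentPolynomial K) (hd : d ≠ 0) :
    N ≤ Module.finrank K
          (LinearMap.range (LinearMap.mulLeft K (Ideal.Quotient.mk (tIdeal K N) d)))
        + Module.finrank K (LaurentPolynomial K ⧸ Ideal.span {d}) := by
  haveI := finite_quot_tIdeal (K := K) N hN
  set W := LinearMap.range (LinearMap.mulLeft K (Ideal.Quotient.mk (tIdeal K N) d)) with hW
  have h1 := Submodule.finrank_quotient_add_finrank W
  rw [finrank_quot_tIdeal N hN] at h1
  -- a surjection from R ⧸ (d) onto R_N ⧸ W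
  let q1 : LaurentPolynomial K →ₗ[K] ((LaurentPolynomial K ⧸ tIdeal K N) ⧸ W) :=
    W.mkQ.comp (Ideal.Quotient.mkₐ K (tIdeal K N)).toLinearMap
  have hker : (Ideal.span {d}).restrictScalars K ≤ LinearMap.ker q1 := by
    intro x hx
    rw [Submodule.restrictScalars_mem, Ideal.mem_span_singleton] at hx
    obtain ⟨y, rfl⟩ := hx
    rw [LinearMap.mem_ker]
    show W.mkQ (Ideal.Quotient.mk (tIdeal K N) (d * y)) = 0
    rw [Submodule.mkQ_apply, Submodule.Quotient.mk_eq_zero, map_mul]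
    exact ⟨Ideal.Quotient.mk _ y, rfl⟩
  let s := Submodule.liftQ ((Ideal.span {d}).restrictScalars K) q1 hker
  have hsur : Function.Surjective s := by
    intro z
    obtain ⟨w, rfl⟩ := W.mkQ_surjective z
    obtain ⟨x, rfl⟩ := Ideal.Quotient.mk_surjective w
    exact ⟨Submodule.Quotient.mk x, by rw [Submodule.liftQ_apply]; rfl⟩
  haveI : Module.Finite K (LaurentPolynomial K ⧸ Ideal.span {d}) :=
    finite_quot_span_singleton d hd
  haveI : Module.Finite K
      (LaurentPolynomial K ⧸ (Ideal.span {d}).restrictScalars K) :=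
    Module.Finite.equiv (Submodule.Quotient.restrictScalarsEquiv K (Ideal.span {d})).symm
  have h2 : Module.finrank K ((LaurentPolynomial K ⧸ tIdeal K N) ⧸ W)
      ≤ Module.finrank K (LaurentPolynomial K ⧸ Ideal.span {d}) := by
    calc Module.finrank K ((LaurentPolynomial K ⧸ tIdeal K N) ⧸ W)
        = Module.finrank K (LinearMap.range s) := by
          rw [LinearMap.range_eq_top.mpr hsur]
          exact (finrank_top _ _).symm
      _ ≤ Module.finrank K (LaurentPolynomial K ⧸ (Ideal.span {d}).restrictScalars K) :=
          LinearMap.finrank_range_le s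
      _ = Module.finrank K (LaurentPolynomial K ⧸ Ideal.span {d}) :=
          (Submodule.Quotient.restrictScalarsEquiv K (Ideal.span {d})).finrank_eq
  omega

end Stmt11Aux
theorem stmt11 (K : Type) [Field K] [IsAlgClosed K] (a b : ℕ)
    (A : Matrix (Fin a) (Fin b) (LaurentPolynomial K)) :
    ∃ c : ℕ, ∀ N : ℕ, 0 < N →
      N * (A.map (algebraMap (LaurentPolynomial K)
            (FractionRing (LaurentPolynomial K)))).rank - c ≤
          Module.finrank K (LinearMap.range (matrixModN N A)) ∧
        Module.finrank K (LinearMap.range (matrixModN N A)) ≤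
          N * (A.map (algebraMap (LaurentPolynomial K)
            (FractionRing (LaurentPolynomial K)))).rank := by
  classical
  obtain ⟨n, bM, bN, f, d, hsnf⟩ :=
    Submodule.smithNormalForm (Pi.basisFun (LaurentPolynomial K) (Fin a))
      (LinearMap.range A.mulVecLin)
  have hdne : ∀ i, d i ≠ 0 := by
    intro i hdi
    have h0 : ((bN i : Fin a → LaurentPolynomial K)) = 0 := by rw [hsnf i, hdi, zero_smul]
    exact bN.ne_zero i (ZeroMemClass.coe_eq_zero.mp h0)
  have hMspan : LinearMap.range A.mulVecLin
      = Submodule.span (LaurentPolynomial K)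
          (Set.range fun i => (bN i : Fin a → LaurentPolynomial K)) := by
    apply le_antisymm
    · intro x hx
      have hxr := bN.sum_repr ⟨x, hx⟩
      have hxs := congrArg (Subtype.val) hxr
      simp only [AddSubmonoidClass.coe_finset_sum, SetLike.val_smul] at hxs
      rw [← hxs]
      exact Submodule.sum_mem _ fun i _ =>
        Submodule.smul_mem _ _ (Submodule.subset_span ⟨i, rfl⟩)
    · rw [Submodule.span_le]
      rintro _ ⟨i, rfl⟩
      exact (bN i).2
  have hrn : (A.map (algebraMap (LaurentPolynomial K)
      (FractionRing (LaurentPolynomial K)))).rank = n := by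
    set F := FractionRing (LaurentPolynomial K) with hF
    let ιa : (Fin a → LaurentPolynomial K) →ₗ[LaurentPolynomial K] (Fin a → F) :=
      LinearMap.pi fun i => (Algebra.linearMap (LaurentPolynomial K) F).comp (LinearMap.proj i)
    have hinj : Function.Injective ιa := by
      intro x y h
      funext i
      exact IsFractionRing.injective (LaurentPolynomial K) F (congrFun h i)
    have hli1 : LinearIndependent (LaurentPolynomial K)
        (fun i => ιa ((bN i : Fin a → LaurentPolynomial K))) := by
      have h0 := bN.linearIndependent.map' (LinearMap.range A.mulVecLin).subtype
        (Submodule.ker_subtype _)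
      exact h0.map' ιa (LinearMap.ker_eq_bot.mpr hinj)
    have hli : LinearIndependent F (fun i => ιa ((bN i : Fin a → LaurentPolynomial K))) :=
      (LinearIndependent.iff_fractionRing (LaurentPolynomial K) F).mp hli1
    have hcolseq : (A.map (algebraMap (LaurentPolynomial K) F)).transpose = fun j => ιa (A.transpose j) := rfl
    have hspan : LinearMap.range (A.map (algebraMap (LaurentPolynomial K) F)).mulVecLin
        = Submodule.span F (Set.range fun i => ιa ((bN i : Fin a → LaurentPolynomial K))) := by
      rw [Matrix.range_mulVecLin, Matrix.col, hcolseq]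
      calc Submodule.span F (Set.range fun j => ιa (A.transpose j))
          = Submodule.span F (ιa '' Set.range A.transpose) := by exact congrArg _ (Set.range_comp _ _)
        _ = Submodule.span F ↑(Submodule.map ιa
              (Submodule.span (LaurentPolynomial K) (Set.range A.transpose))) := by
            rw [Submodule.map_span, Submodule.span_span_of_tower]
        _ = Submodule.span F ↑(Submodule.map ιa (Submodule.span (LaurentPolynomial K)
              (Set.range fun i => (bN i : Fin a → LaurentPolynomial K)))) := by
            have hMspan' : Submodule.span (LaurentPolynomial K) (Set.range A.transpose)
                = Submodule.span (LaurentPolynomial K)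
                    (Set.range fun i => (bN i : Fin a → LaurentPolynomial K)) := by
              exact (Matrix.range_mulVecLin A).symm.trans hMspan
            rw [hMspan']
        _ = Submodule.span F (ιa '' Set.range fun i => (bN i : Fin a → LaurentPolynomial K)) := by
            rw [Submodule.map_span, Submodule.span_span_of_tower]
        _ = Submodule.span F (Set.range fun i => ιa ((bN i : Fin a → LaurentPolynomial K))) := by
            rw [← Set.range_comp]; rfl
    show Module.finrank F _ = n
    rw [hspan, finrank_span_eq_card hli, Fintype.card_fin]
  refine ⟨∑ i, Module.finrank K (LaurentPolynomial K ⧸ Ideal.span {d i}), fun N hN => ?_⟩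
  haveI := Stmt11Aux.finite_quot_tIdeal (K := K) N hN
  set Q : Matrix (Fin a) (Fin a) (LaurentPolynomial K) :=
    (Pi.basisFun (LaurentPolynomial K) (Fin a)).toMatrix bM with hQ
  set P : Matrix (Fin a) (Fin a) (LaurentPolynomial K) :=
    bM.toMatrix (Pi.basisFun (LaurentPolynomial K) (Fin a)) with hP
  have hQP : Q * P = 1 :=
    (Pi.basisFun (LaurentPolynomial K) (Fin a)).toMatrix_mul_toMatrix_flip bM
  have hPQ : P * Q = 1 :=
    bM.toMatrix_mul_toMatrix_flip (Pi.basisFun (LaurentPolynomial K) (Fin a))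
  set D : Fin a → LaurentPolynomial K :=
    fun j => if h : ∃ i, f i = j then d h.choose else 0 with hD
  have hDf : ∀ i, D (f i) = d i := by
    intro i
    have hex : ∃ i', f i' = f i := ⟨i, rfl⟩
    rw [hD]
    dsimp only
    rw [dif_pos hex]
    congr 1
    exact f.injective hex.choose_spec
  have hD0 : ∀ j, (¬ ∃ i, f i = j) → D j = 0 := fun j h => by
    rw [hD]; exact dif_neg h
  have hcolval : ∀ j, (Q * Matrix.diagonal D).transpose j = D j • bM j := by
    intro j
    funext i
    rw [Matrix.transpose_apply, Matrix.mul_diagonal, Pi.smul_apply, smul_eq_mul, hQ,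
      Module.Basis.toMatrix_apply, Pi.basisFun_repr, mul_comm]
  have hcols : LinearMap.range (Q * Matrix.diagonal D).mulVecLin
      = LinearMap.range A.mulVecLin := by
    apply le_antisymm
    · rw [Matrix.range_mulVecLin, Submodule.span_le]
      rintro _ ⟨j, rfl⟩
      rw [SetLike.mem_coe, Matrix.col, hcolval j]
      by_cases h : ∃ i, f i = j
      · obtain ⟨i, rfl⟩ := h
        rw [hDf i, ← hsnf i]
        exact (bN i).2
      · rw [hD0 j h, zero_smul]
        exact Submodule.zero_mem _
    · rw [hMspan, Submodule.span_le]
      rintro _ ⟨i, rfl⟩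
      have hcol : (bN i : Fin a → LaurentPolynomial K) = (Q * Matrix.diagonal D).transpose (f i) := by
        rw [hcolval (f i), hDf i, ← hsnf i]
      dsimp only
      rw [SetLike.mem_coe, hcol, Matrix.range_mulVecLin]
      exact Submodule.subset_span ⟨f i, rfl⟩
  have hrange1 : LinearMap.range (matrixModN N A)
      = LinearMap.range (matrixModN N (Q * Matrix.diagonal D)) := by
    rw [Stmt11Aux.range_matrixModN, Stmt11Aux.range_matrixModN, hcols]
  have hsplit : ((Q * Matrix.diagonal D).map (Ideal.Quotient.mk (tIdeal K N))).mulVecLin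
      = ((Q.map (Ideal.Quotient.mk (tIdeal K N))).mulVecLin).comp
        (((Matrix.diagonal D).map (Ideal.Quotient.mk (tIdeal K N))).mulVecLin) := by
    rw [Matrix.map_mul, Matrix.mulVecLin_mul]
  let QNe : (Fin a → LaurentPolynomial K ⧸ tIdeal K N)
      ≃ₗ[LaurentPolynomial K ⧸ tIdeal K N] (Fin a → LaurentPolynomial K ⧸ tIdeal K N) :=
    LinearEquiv.ofLinear (Q.map (Ideal.Quotient.mk (tIdeal K N))).mulVecLin
      (P.map (Ideal.Quotient.mk (tIdeal K N))).mulVecLin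
      (by rw [← Matrix.mulVecLin_mul, ← Matrix.map_mul, hQP,
            Matrix.map_one _ (map_zero _) (map_one _), Matrix.mulVecLin_one])
      (by rw [← Matrix.mulVecLin_mul, ← Matrix.map_mul, hPQ,
            Matrix.map_one _ (map_zero _) (map_one _), Matrix.mulVecLin_one])
  have hrange2 : LinearMap.range (matrixModN N (Q * Matrix.diagonal D))
      = Submodule.map
          ((QNe.restrictScalars K).toLinearMap)
          (LinearMap.range (matrixModN N (Matrix.diagonal D))) := by
    have h1 : matrixModN N (Q * Matrix.diagonal D)
        = ((QNe.restrictScalars K).toLinearMap).comp (matrixModN N (Matrix.diagonal D)) := by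
      apply LinearMap.ext
      intro v
      show ((Q * Matrix.diagonal D).map (Ideal.Quotient.mk (tIdeal K N))).mulVecLin v
        = (Q.map (Ideal.Quotient.mk (tIdeal K N))).mulVecLin
            (((Matrix.diagonal D).map (Ideal.Quotient.mk (tIdeal K N))).mulVecLin v)
      rw [hsplit]
      rfl
    rw [h1]
    exact LinearMap.range_comp _ _
  have hfr2 : Module.finrank K (LinearMap.range (matrixModN N A))
      = Module.finrank K (LinearMap.range (matrixModN N (Matrix.diagonal D))) := by
    rw [hrange1, hrange2]
    exact LinearEquiv.finrank_map_eq (QNe.restrictScalars K) _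
  set W : Fin a → Submodule K (LaurentPolynomial K ⧸ tIdeal K N) :=
    fun j => LinearMap.range (LinearMap.mulLeft K (Ideal.Quotient.mk (tIdeal K N) (D j)))
    with hWdef
  have hdiag : LinearMap.range (matrixModN N (Matrix.diagonal D)) = Submodule.pi Set.univ W := by
    ext x
    simp only [LinearMap.mem_range, Submodule.mem_pi, Set.mem_univ, forall_true_left, hWdef]
    constructor
    · rintro ⟨v, rfl⟩ j
      refine ⟨v j, ?_⟩
      show Ideal.Quotient.mk (tIdeal K N) (D j) * v j
        = ((Matrix.diagonal D).map (Ideal.Quotient.mk (tIdeal K N))).mulVec v j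
      rw [Matrix.diagonal_map (map_zero _), Matrix.mulVec_diagonal]
    · intro h
      choose v hv using h
      refine ⟨v, ?_⟩
      show ((Matrix.diagonal D).map (Ideal.Quotient.mk (tIdeal K N))).mulVec v = x
      funext j
      rw [Matrix.diagonal_map (map_zero _), Matrix.mulVec_diagonal]
      exact hv j
  haveI : ∀ j, Module.Finite K (W j) := fun j => inferInstance
  have hfr3 : Module.finrank K (Submodule.pi Set.univ W) = ∑ j, Module.finrank K (W j) :=
    Stmt11Aux.finrank_submodule_pi W
  have hW0 : ∀ j, (¬ ∃ i, f i = j) → Module.finrank K (W j) = 0 := by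
    intro j h
    rw [hWdef]
    dsimp only
    show Module.finrank K (LinearMap.range (LinearMap.mulLeft K (Ideal.Quotient.mk (tIdeal K N) (D j)))) = 0
    rw [hD0 j h, map_zero, LinearMap.mulLeft_zero_eq_zero, LinearMap.range_zero, finrank_bot]
  have hsum : ∑ j, Module.finrank K (W j) = ∑ i, Module.finrank K (W (f i)) := by
    calc ∑ j, Module.finrank K (W j)
        = ∑ j ∈ Finset.univ.image f, Module.finrank K (W j) :=
          (Finset.sum_subset (Finset.subset_univ _) (fun j _ hj =>
            hW0 j (fun ⟨i, hi⟩ => hj (Finset.mem_image.mpr ⟨i, Finset.mem_univ i, hi⟩)))).symm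
      _ = ∑ i, Module.finrank K (W (f i)) :=
          Finset.sum_image (fun x _ y _ h => f.injective h)
  have hup : ∀ i : Fin n, Module.finrank K (W (f i)) ≤ N := fun i =>
    le_trans (Submodule.finrank_le _) (le_of_eq (Stmt11Aux.finrank_quot_tIdeal N hN))
  have hlow : ∀ i : Fin n, N ≤ Module.finrank K (W (f i))
      + Module.finrank K (LaurentPolynomial K ⧸ Ideal.span {d i}) := by
    intro i
    have h := Stmt11Aux.finrank_range_mulLeft_ge N hN (d i) (hdne i)
    rw [hWdef]
    dsimp only
    show N ≤ Module.finrank K (LinearMap.range (LinearMap.mulLeft K (Ideal.Quotient.mk (tIdeal K N) (D (f i))))) + Module.finrank K (LaurentPolynomial K ⧸ Ideal.span {d i})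
    rw [hDf i]
    exact h
  have htotal : Module.finrank K (LinearMap.range (matrixModN N A))
      = ∑ i, Module.finrank K (W (f i)) := by
    rw [hfr2, hdiag, hfr3, hsum]
  constructor
  · rw [hrn, htotal, tsub_le_iff_right]
    calc N * n = ∑ _i : Fin n, N := by
          rw [Finset.sum_const, Finset.card_univ, Fintype.card_fin, smul_eq_mul, mul_comm]
      _ ≤ ∑ i, (Module.finrank K (W (f i))
            + Module.finrank K (LaurentPolynomial K ⧸ Ideal.span {d i})) :=
          Finset.sum_le_sum (fun i _ => hlow i)
      _ = (∑ i, Module.finrank K (W (f i)))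
            + ∑ i, Module.finrank K (LaurentPolynomial K ⧸ Ideal.span {d i}) :=
          Finset.sum_add_distrib
  · rw [hrn, htotal]
    calc ∑ i, Module.finrank K (W (f i)) ≤ ∑ _i : Fin n, N :=
          Finset.sum_le_sum (fun i _ => hup i)
      _ = N * n := by
          rw [Finset.sum_const, Finset.card_univ, Fintype.card_fin, smul_eq_mul, mul_comm]
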